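/- arXiv:2102.02023 — 6 statements merged into one kernel-verified Lean document; each statement's English description precedes it below -/
import Mathlib

section
/- Let f : [0,1] → [0,1] be continuous with f(0)=0, f(1)=1, f((0,1)) ⊆ (0,1), and suppose the right derivative f'(0) = lim_{x→0⁺} f(x)/x exists and is a finite positive real a. Then the conjugated map F = h ∘ f|_{(0,1)} ∘ h⁻¹ : ℝ → ℝ satisfies lim_{x→-∞} (F(x) - x) = log(a). -/
/-- The homeomorphism `h : (0,1) → ℝ` from Alsedà–Misiurewicz. -/
noncomputable def h (x : ℝ) : ℝ :=
  if x ≤ 1/2 then Real.log x - Real.log (1/2) else Real.log (1/2) - Real.log (1 - x)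

/-- The inverse of `h`. -/
noncomputable def hinv (y : ℝ) : ℝ :=
  if y ≤ 0 then Real.exp y / 2 else 1 - Real.exp (-y) / 2

/-- if `f : [0,1] → [0,1]` is continuous, fixes `0` and `1`, maps `(0,1)`
into `(0,1)`, and has a finite positive right derivative `a` at `0`
(i.e. `f(x)/x → a` as `x → 0⁺`), then `F = h ∘ f ∘ h⁻¹` satisfies
`F(x) - x → log a` as `x → -∞`. -/
theorem conjugate_limit_atBot (f : ℝ → ℝ) (a : ℝ)
    (hf : ContinuousOn f (Set.Icc 0 1))
    (h0 : f 0 = 0) (h1 : f 1 = 1)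
    (hoo : Set.MapsTo f (Set.Ioo 0 1) (Set.Ioo 0 1))
    (ha : 0 < a)
    (hderiv : Filter.Tendsto (fun x => f x / x) (nhdsWithin 0 (Set.Ioi 0)) (nhds a)) :
    Filter.Tendsto (fun x => h (f (hinv x)) - x) Filter.atBot (nhds (Real.log a)) := by
  have key : Filter.Tendsto (fun x : ℝ => Real.exp x / 2) Filter.atBot
      (nhdsWithin 0 (Set.Ioi 0)) := by
    apply tendsto_nhdsWithin_of_tendsto_nhds_of_eventually_within
    · have := Real.tendsto_exp_atBot.div_const 2
      simpa using this
    · filter_upwards with x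
      have : (0:ℝ) < Real.exp x / 2 := by positivity
      exact this
  have hft : Filter.Tendsto (fun x => f (Real.exp x / 2) / (Real.exp x / 2))
      Filter.atBot (nhds a) := hderiv.comp key
  -- f t tends to 0
  have hf0 : Filter.Tendsto (fun x => f (Real.exp x / 2)) Filter.atBot (nhds 0) := by
    have hkey0 : Filter.Tendsto (fun x : ℝ => Real.exp x / 2) Filter.atBot (nhds 0) :=
      key.mono_right nhdsWithin_le_nhds
    have := hft.mul hkey0
    rw [mul_zero] at this
    apply this.congr
    intro x
    have ht : (0:ℝ) < Real.exp x / 2 := by positivity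
    field_simp
  -- eventually f t < 1/2
  have hhalf : ∀ᶠ x in Filter.atBot, f (Real.exp x / 2) < 1/2 :=
    hf0.eventually_lt_const (by norm_num)
  -- eventually t ∈ Ioo 0 1 hence f t ∈ Ioo 0 1
  have hfo : ∀ᶠ x in Filter.atBot, f (Real.exp x / 2) ∈ Set.Ioo (0:ℝ) 1 := by
    filter_upwards [Filter.eventually_le_atBot (0:ℝ)] with x hx
    apply hoo
    constructor
    · positivity
    · have : Real.exp x ≤ 1 := Real.exp_le_one_iff.mpr hx
      linarith
  have hlog : Filter.Tendsto
      (fun x => Real.log (f (Real.exp x / 2) / (Real.exp x / 2)))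
      Filter.atBot (nhds (Real.log a)) :=
    (Real.continuousAt_log ha.ne').tendsto.comp hft
  apply hlog.congr'
  filter_upwards [Filter.eventually_le_atBot (0:ℝ), hfo, hhalf] with x hx hio hh
  have ht : (0:ℝ) < Real.exp x / 2 := by positivity
  have hinv_eq : hinv x = Real.exp x / 2 := if_pos hx
  rw [hinv_eq]
  rw [show h (f (Real.exp x / 2)) = Real.log (f (Real.exp x / 2)) - Real.log (1/2) from
    if_pos hh.le]
  rw [Real.log_div hio.1.ne' ht.ne', Real.log_div (Real.exp_pos x).ne' two_ne_zero,
    Real.log_exp, one_div, Real.log_inv]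
  ring
end

section
/- Let f : [0,1] → [0,1] be continuous with f(0)=0, f(1)=1, f((0,1)) ⊆ (0,1), and suppose the left derivative f'(1) = lim_{x→1⁻} (1-f(x))/(1-x) exists and is a finite positive real b. Then F = h ∘ f|_{(0,1)} ∘ h⁻¹ satisfies lim_{x→+∞} (F(x) - x) = -log(b). -/
/-- if `f : [0,1] → [0,1]` is continuous, fixes `0` and `1`, maps `(0,1)`
into `(0,1)`, and has a finite positive left derivative `b` at `1`
(i.e. `(1 - f(x))/(1 - x) → b` as `x → 1⁻`), then `F = h ∘ f ∘ h⁻¹` satisfies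
`F(x) - x → -log b` as `x → +∞`. -/
theorem conjugate_limit_atTop (f : ℝ → ℝ) (b : ℝ)
    (hf : ContinuousOn f (Set.Icc 0 1))
    (h0 : f 0 = 0) (h1 : f 1 = 1)
    (hoo : Set.MapsTo f (Set.Ioo 0 1) (Set.Ioo 0 1))
    (hb : 0 < b)
    (hderiv : Filter.Tendsto (fun x => (1 - f x) / (1 - x))
      (nhdsWithin 1 (Set.Iio 1)) (nhds b)) :
    Filter.Tendsto (fun x => h (f (hinv x)) - x) Filter.atTop (nhds (-Real.log b)) := by
  have hinv_eq : ∀ x : ℝ, 0 < x → hinv x = 1 - Real.exp (-x) / 2 := by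
    intro x hx
    simp [hinv, not_le.mpr hx]
  have hmem : ∀ x : ℝ, 0 < x → hinv x ∈ Set.Ioo (1/2 : ℝ) 1 := by
    intro x hx
    rw [hinv_eq x hx]
    have h1 : Real.exp (-x) < 1 := Real.exp_lt_one_iff.mpr (by linarith)
    have h2 : 0 < Real.exp (-x) := Real.exp_pos _
    constructor <;> nlinarith
  -- hinv tendsto 1 from the left
  have hexp : Filter.Tendsto (fun x : ℝ => Real.exp (-x)) Filter.atTop (nhds 0) :=
    Real.tendsto_exp_neg_atTop_nhds_zero
  have h1t : Filter.Tendsto (fun x : ℝ => 1 - Real.exp (-x) / 2) Filter.atTop (nhds 1) := by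
    have := Filter.Tendsto.const_sub (1 : ℝ) (hexp.div_const 2)
    simpa using this
  have hpos : ∀ᶠ x : ℝ in Filter.atTop, 0 < x := Filter.eventually_gt_atTop 0
  have htend1 : Filter.Tendsto hinv Filter.atTop (nhds 1) := by
    apply h1t.congr'
    filter_upwards [hpos] with x hx using (hinv_eq x hx).symm
  have htend : Filter.Tendsto hinv Filter.atTop (nhdsWithin 1 (Set.Iio 1)) := by
    rw [tendsto_nhdsWithin_iff]
    refine ⟨htend1, ?_⟩
    filter_upwards [hpos] with x hx using (hmem x hx).2
  have hcomp : Filter.Tendsto (fun x => (1 - f (hinv x)) / (1 - hinv x))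
      Filter.atTop (nhds b) := hderiv.comp htend
  -- f (hinv x) → 1
  have hsub : Filter.Tendsto (fun x => 1 - hinv x) Filter.atTop (nhds 0) := by
    have := Filter.Tendsto.const_sub (1 : ℝ) htend1
    simpa using this
  have hfu1 : Filter.Tendsto (fun x => f (hinv x)) Filter.atTop (nhds 1) := by
    have hmul : Filter.Tendsto (fun x => (1 - f (hinv x)) / (1 - hinv x) * (1 - hinv x))
        Filter.atTop (nhds (b * 0)) := hcomp.mul hsub
    have heq : ∀ᶠ x : ℝ in Filter.atTop,
        (1 - f (hinv x)) / (1 - hinv x) * (1 - hinv x) = 1 - f (hinv x) := by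
      filter_upwards [hpos] with x hx
      have : (1:ℝ) - hinv x ≠ 0 := by linarith [(hmem x hx).2]
      field_simp
    have h0' : Filter.Tendsto (fun x => 1 - f (hinv x)) Filter.atTop (nhds 0) := by
      rw [mul_zero] at hmul
      exact hmul.congr' heq
    have := Filter.Tendsto.const_sub (1 : ℝ) h0'
    simpa using this
  have hfu_half : ∀ᶠ x : ℝ in Filter.atTop, 1/2 < f (hinv x) :=
    hfu1.eventually (eventually_gt_nhds (by norm_num))
  -- the limit of the target expression
  have hlog : Filter.Tendsto (fun x => -Real.log ((1 - f (hinv x)) / (1 - hinv x)))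
      Filter.atTop (nhds (-Real.log b)) :=
    (((Real.continuousAt_log hb.ne').tendsto.comp hcomp).neg)
  apply hlog.congr'
  filter_upwards [hpos, hfu_half] with x hx hfx
  have hu := hmem x hx
  have hfu : f (hinv x) ∈ Set.Ioo (0:ℝ) 1 := hoo ⟨by linarith [hu.1], hu.2⟩
  have hx1 : (0:ℝ) < 1 - f (hinv x) := by linarith [hfu.2]
  have hx2 : (0:ℝ) < 1 - hinv x := by linarith [hu.2]
  have hh : h (f (hinv x)) = Real.log (1/2) - Real.log (1 - f (hinv x)) := by
    rw [h, if_neg (not_le.mpr hfx)]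
  have hlogu : Real.log (1 - hinv x) = -x - Real.log 2 := by
    rw [hinv_eq x hx]
    have : (1 : ℝ) - (1 - Real.exp (-x) / 2) = Real.exp (-x) / 2 := by ring
    rw [this, Real.log_div (Real.exp_ne_zero _) (by norm_num), Real.log_exp]
  rw [Real.log_div hx1.ne' hx2.ne', hh, hlogu]
  have : Real.log (1/2 : ℝ) = -Real.log 2 := by
    rw [Real.log_div (by norm_num) (by norm_num), Real.log_one]; ring
  rw [this]; ring
end

section
/- Let F : ℝ → ℝ be a continuous surjection such that L = lim_{x→-∞}(F(x) - x) exists and is finite. Then the map f : [0,1] → [0,1] defined by f(0)=0, f(1)=1, and f(x) = h⁻¹(F(h(x))) for x ∈ (0,1) is continuous at 0, and the limit lim_{x→0⁺} f(x)/x exists and equals e^L. -/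
/-- if `F : ℝ → ℝ` is a continuous surjection with
`F(x) - x → L` (finite) as `x → -∞`, then the map `f` defined by `f 0 = 0`, `f 1 = 1`
and `f = h⁻¹ ∘ F ∘ h` on `(0,1)` is continuous at `0` (within `[0,1]`) and
`f(x)/x → e^L` as `x → 0⁺`. -/
theorem transfer_back_derivative (F : ℝ → ℝ) (L : ℝ)
    (hF : Continuous F) (hsurj : Function.Surjective F)
    (hL : Filter.Tendsto (fun x => F x - x) Filter.atBot (nhds L))
    (f : ℝ → ℝ)
    (hfdef : ∀ x, f x = if x = 0 then 0 else if x = 1 then 1 else hinv (F (h x))) :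
    ContinuousWithinAt f (Set.Icc 0 1) 0 ∧
      Filter.Tendsto (fun x => f x / x) (nhdsWithin 0 (Set.Ioi 0))
        (nhds (Real.exp L)) := by
  -- eventually x is small and positive
  have hioo : Set.Ioo (0:ℝ) (1/2) ∈ nhdsWithin 0 (Set.Ioi 0) :=
    Ioo_mem_nhdsGT_of_mem (by norm_num)
  have hsmall : ∀ᶠ x : ℝ in nhdsWithin 0 (Set.Ioi 0), 0 < x ∧ x ≤ 1/2 := by
    filter_upwards [hioo] with x hx
    exact ⟨hx.1, le_of_lt hx.2⟩
  have hform : ∀ x : ℝ, x ≤ 1/2 → h x = Real.log x - Real.log (1/2) :=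
    fun x hx => if_pos hx
  -- h tends to -∞ as x → 0⁺
  have htends : Filter.Tendsto h (nhdsWithin 0 (Set.Ioi 0)) Filter.atBot := by
    have hlog : Filter.Tendsto Real.log (nhdsWithin 0 (Set.Ioi 0)) Filter.atBot :=
      Real.tendsto_log_nhdsGT_zero
    have := Filter.tendsto_atBot_add_const_right _ (-Real.log (1/2)) hlog
    refine this.congr' ?_
    filter_upwards [hsmall] with x hx
    rw [hform x hx.2, sub_eq_add_neg]
  have hFH : Filter.Tendsto (fun x => F (h x) - h x) (nhdsWithin 0 (Set.Ioi 0)) (nhds L) :=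
    hL.comp htends
  have hFbot : Filter.Tendsto (fun x => F (h x)) (nhdsWithin 0 (Set.Ioi 0)) Filter.atBot := by
    have : (fun x => F (h x)) = fun x => (F (h x) - h x) + h x := by
      funext x; ring
    rw [this]
    exact Filter.Tendsto.add_atBot hFH htends
  have hFle : ∀ᶠ x : ℝ in nhdsWithin 0 (Set.Ioi 0), F (h x) ≤ 0 :=
    hFbot.eventually_le_atBot 0
  -- eventual formula for f x / x
  have hev : ∀ᶠ x : ℝ in nhdsWithin 0 (Set.Ioi 0),
      f x / x = Real.exp (F (h x) - h x) := by
    filter_upwards [hsmall, hFle] with x hx hle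
    have hx0 : x ≠ 0 := ne_of_gt hx.1
    have hx1 : x ≠ 1 := by
      intro hc; rw [hc] at hx; linarith [hx.2]
    have hfx : f x = Real.exp (F (h x)) / 2 := by
      rw [hfdef x, if_neg hx0, if_neg hx1, hinv, if_pos hle]
    have hhx : Real.exp (h x) = 2 * x := by
      rw [hform x hx.2, Real.exp_sub, Real.exp_log hx.1, Real.exp_log (by norm_num : (0:ℝ) < 1/2)]
      ring
    rw [hfx, Real.exp_sub, hhx]
    field_simp
  have hmain : Filter.Tendsto (fun x => f x / x) (nhdsWithin 0 (Set.Ioi 0))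
      (nhds (Real.exp L)) := by
    refine Filter.Tendsto.congr' (Filter.EventuallyEq.symm hev) ?_
    exact (Real.continuous_exp.tendsto L).comp hFH
  refine ⟨?_, hmain⟩
  -- continuity at 0 within [0,1]
  have hf0 : f 0 = 0 := by rw [hfdef 0]; simp
  have hright : Filter.Tendsto f (nhdsWithin 0 (Set.Ioi 0)) (nhds 0) := by
    have : Filter.Tendsto (fun x => (f x / x) * x) (nhdsWithin 0 (Set.Ioi 0))
        (nhds (Real.exp L * 0)) :=
      hmain.mul (tendsto_nhdsWithin_of_tendsto_nhds Filter.tendsto_id)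
    rw [mul_zero] at this
    refine this.congr' ?_
    filter_upwards [self_mem_nhdsWithin] with x hx
    exact div_mul_cancel₀ (f x) (ne_of_gt hx)
  have hsub : Set.Icc (0:ℝ) 1 ⊆ {0} ∪ Set.Ioi 0 := by
    intro x hx
    rcases eq_or_lt_of_le hx.1 with h | h
    · exact Or.inl h.symm
    · exact Or.inr h
  have hpure : Filter.Tendsto f (nhdsWithin 0 ({0} : Set ℝ)) (nhds 0) := by
    rw [nhdsWithin_singleton]
    simpa [hf0] using tendsto_pure_nhds f 0
  rw [ContinuousWithinAt, hf0]
  refine Filter.Tendsto.mono_left ?_ (nhdsWithin_mono 0 hsub)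
  rw [nhdsWithin_union]
  exact Filter.Tendsto.sup hpure hright
end

section
/- Given two Cantor sets C₁, C₂ ⊂ ℝ (nonempty, compact, totally disconnected, perfect) with m_i = min C_i and M_i = max C_i, there exists an order-preserving homeomorphism f : [m₁, M₁] → [m₂, M₂] with f(C₁) = C₂. -/
open Set

namespace CantorAux

/-- A (bounded) gap of a set `C ⊆ ℝ`: a pair of points of `C` with nothing of `C` between. -/
structure Gap (C : Set ℝ) where
  a : ℝ
  b : ℝ
  ha : a ∈ C
  hb : b ∈ C
  hab : a < b
  hioo : Set.Ioo a b ∩ C = ∅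

variable {C : Set ℝ}

lemma Gap.notMem_ioo (g : Gap C) {y : ℝ} (hy : y ∈ C) : y ∉ Set.Ioo g.a g.b := by
  intro h
  have : y ∈ Set.Ioo g.a g.b ∩ C := ⟨h, hy⟩
  rw [g.hioo] at this
  exact this

lemma gap_fst_injective : Function.Injective (fun g : Gap C => g.a) := by
  rintro g g' h
  simp only at h
  have h2 : g.b = g'.b := by
    by_contra hne
    rcases lt_or_gt_of_ne hne with hlt | hlt
    · exact g'.notMem_ioo g.hb ⟨h ▸ g.hab, hlt⟩
    · exact g.notMem_ioo g'.hb ⟨h ▸ g'.hab, hlt⟩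
  cases g; cases g'; simp_all

noncomputable instance : LinearOrder (Gap C) :=
  LinearOrder.lift' (fun g : Gap C => g.a) gap_fst_injective

lemma gap_le_iff {g g' : Gap C} : g ≤ g' ↔ g.a ≤ g'.a := Iff.rfl

lemma gap_lt_iff {g g' : Gap C} : g < g' ↔ g.a < g'.a := by
  rw [lt_iff_le_not_ge, lt_iff_le_not_ge, gap_le_iff, gap_le_iff]

lemma gap_b_le_a {g g' : Gap C} (h : g < g') : g.b ≤ g'.a := by
  rw [gap_lt_iff] at h
  by_contra hlt
  exact g.notMem_ioo g'.ha ⟨h, lt_of_not_ge hlt⟩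




/-- If `x ∉ C` lies strictly between two points of `C`, there is a gap of `C` around `x`,
contained in the interval. -/
lemma exists_gap_around (hc : IsCompact C) {u v x : ℝ} (hu : u ∈ C) (hv : v ∈ C)
    (hux : u < x) (hxv : x < v) (hxC : x ∉ C) :
    ∃ g : Gap C, u ≤ g.a ∧ g.b ≤ v ∧ x ∈ Set.Ioo g.a g.b := by
  have hL : IsCompact (C ∩ Icc u x) := hc.inter_right isClosed_Icc
  have hR : IsCompact (C ∩ Icc x v) := hc.inter_right isClosed_Icc
  have hLne : (C ∩ Icc u x).Nonempty := ⟨u, hu, le_refl u, hux.le⟩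
  have hRne : (C ∩ Icc x v).Nonempty := ⟨v, hv, hxv.le, le_refl v⟩
  set A := sSup (C ∩ Icc u x) with hA
  set B := sInf (C ∩ Icc x v) with hB
  have hAmem : A ∈ C ∩ Icc u x := hL.sSup_mem hLne
  have hBmem : B ∈ C ∩ Icc x v := hR.sInf_mem hRne
  have hAx : A < x := lt_of_le_of_ne hAmem.2.2 (fun h => hxC (h ▸ hAmem.1))
  have hxB : x < B := lt_of_le_of_ne (hBmem.2.1) (fun h => hxC (h.symm ▸ hBmem.1))
  refine ⟨⟨A, B, hAmem.1, hBmem.1, hAx.trans hxB, ?_⟩, hAmem.2.1, hBmem.2.2, hAx, hxB⟩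
  ext y
  simp only [Set.mem_inter_iff, Set.mem_Ioo, Set.mem_empty_iff_false, iff_false, not_and]
  rintro ⟨hy1, hy2⟩ hyC
  rcases le_or_gt y x with h | h
  · have : y ≤ A := le_csSup hL.bddAbove ⟨hyC, (hAmem.2.1.trans hy1.le), h⟩
    exact absurd hy1 (not_lt_of_ge this)
  · have : B ≤ y := csInf_le hR.bddBelow ⟨hyC, h.le, hy2.le.trans hBmem.2.2⟩
    exact absurd hy2 (not_lt_of_ge this)

/-- Between any two points of a compact totally disconnected set there is a gap. -/
lemma exists_gap_between (hc : IsCompact C) (ht : IsTotallyDisconnected C)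
    {u v : ℝ} (hu : u ∈ C) (hv : v ∈ C) (huv : u < v) :
    ∃ g : Gap C, u ≤ g.a ∧ g.b ≤ v := by
  have : ¬ (Set.Ioo u v ⊆ C) := by
    intro hsub
    have hIcc : Set.Icc u v ⊆ C := by
      intro y hy
      rcases eq_or_lt_of_le hy.1 with rfl | h1
      · exact hu
      rcases eq_or_lt_of_le hy.2 with rfl | h2
      · exact hv
      exact hsub ⟨h1, h2⟩
    have := ht (Set.Icc u v) hIcc isPreconnected_Icc
    exact absurd (this (Set.left_mem_Icc.2 huv.le) (Set.right_mem_Icc.2 huv.le)) huv.ne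
  rcases Set.not_subset.1 this with ⟨x, hx, hxC⟩
  obtain ⟨g, h1, h2, _⟩ := exists_gap_around hc hu hv hx.1 hx.2 hxC
  exact ⟨g, h1, h2⟩

/-- A perfect set has no isolated points. -/
lemma exists_near (hp : Perfect C) {x u v : ℝ} (hx : x ∈ C) (hu : u < x) (hv : x < v) :
    ∃ y ∈ C, y ∈ Set.Ioo u v ∧ y ≠ x := by
  have hacc := hp.acc x hx
  rw [accPt_iff_nhds] at hacc
  obtain ⟨y, ⟨hy1, hy2⟩, hy3⟩ := hacc (Set.Ioo u v) (Ioo_mem_nhds hu hv)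
  exact ⟨y, hy2, hy1, hy3⟩



lemma sInf_lt_gap (hc : IsCompact C) (hp : Perfect C) (hne : C.Nonempty) (g : Gap C) :
    sInf C < g.a := by
  rcases lt_or_eq_of_le (csInf_le hc.bddBelow g.ha) with h | h
  · exact h
  · exfalso
    obtain ⟨y, hyC, hyI, hyne⟩ := exists_near hp g.ha (sub_one_lt g.a) g.hab
    have h1 : g.a ≤ y := h ▸ csInf_le hc.bddBelow hyC
    have h2 : g.a < y := lt_of_le_of_ne h1 (Ne.symm hyne)
    exact g.notMem_ioo hyC ⟨h2, hyI.2⟩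

lemma gap_lt_sSup (hc : IsCompact C) (hp : Perfect C) (hne : C.Nonempty) (g : Gap C) :
    g.b < sSup C := by
  rcases lt_or_eq_of_le (le_csSup hc.bddAbove g.hb) with h | h
  · exact h
  · exfalso
    obtain ⟨y, hyC, hyI, hyne⟩ := exists_near hp g.hb g.hab (lt_add_one g.b)
    have h1 : y ≤ g.b := h ▸ le_csSup hc.bddAbove hyC
    have h2 : y < g.b := lt_of_le_of_ne h1 hyne
    exact g.notMem_ioo hyC ⟨hyI.1, h2⟩

lemma gap_b_lt_a (hp : Perfect C) {g g' : Gap C} (h : g < g') : g.b < g'.a := by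
  rcases lt_or_eq_of_le (gap_b_le_a h) with h2 | h2
  · exact h2
  · exfalso
    obtain ⟨y, hyC, hyI, hyne⟩ := exists_near hp g.hb g.hab (h2 ▸ g'.hab)
    rcases lt_or_gt_of_ne hyne with hlt | hgt
    · exact g.notMem_ioo hyC ⟨hyI.1, hlt⟩
    · exact g'.notMem_ioo hyC ⟨h2 ▸ hgt, hyI.2⟩

lemma sInf_lt_sSup (hc : IsCompact C) (hp : Perfect C) (hne : C.Nonempty) :
    sInf C < sSup C := by
  rcases lt_or_eq_of_le (csInf_le_csSup hne hc.bddBelow hc.bddAbove) with h | h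
  · exact h
  · exfalso
    have hm : sInf C ∈ C := hc.sInf_mem hne
    obtain ⟨y, hyC, _, hyne⟩ := exists_near hp hm (sub_one_lt _) (lt_add_one _)
    have h1 : sInf C ≤ y := csInf_le hc.bddBelow hyC
    have h2 : y ≤ sSup C := le_csSup hc.bddAbove hyC
    exact hyne (le_antisymm (h ▸ h2) h1)

lemma gap_nonempty (hc : IsCompact C) (hp : Perfect C) (hne : C.Nonempty)
    (ht : IsTotallyDisconnected C) : Nonempty (Gap C) := by
  obtain ⟨g, _, _⟩ := exists_gap_between hc ht (hc.sInf_mem hne) (hc.sSup_mem hne)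
    (sInf_lt_sSup hc hp hne)
  exact ⟨g⟩

lemma gap_densely (hc : IsCompact C) (hp : Perfect C) (hne : C.Nonempty)
    (ht : IsTotallyDisconnected C) : DenselyOrdered (Gap C) := by
  constructor
  intro g g' h
  obtain ⟨g₀, h1, h2⟩ := exists_gap_between hc ht g.hb g'.ha (gap_b_lt_a hp h)
  refine ⟨g₀, gap_lt_iff.2 (lt_of_lt_of_le g.hab h1), gap_lt_iff.2 ?_⟩
  exact lt_of_lt_of_le g₀.hab h2

lemma gap_noMin (hc : IsCompact C) (hp : Perfect C) (hne : C.Nonempty)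
    (ht : IsTotallyDisconnected C) : NoMinOrder (Gap C) := by
  constructor
  intro g
  obtain ⟨g₀, _, h2⟩ := exists_gap_between hc ht (hc.sInf_mem hne) g.ha
    (sInf_lt_gap hc hp hne g)
  exact ⟨g₀, gap_lt_iff.2 (lt_of_lt_of_le g₀.hab h2)⟩

lemma gap_noMax (hc : IsCompact C) (hp : Perfect C) (hne : C.Nonempty)
    (ht : IsTotallyDisconnected C) : NoMaxOrder (Gap C) := by
  constructor
  intro g
  obtain ⟨g₀, h1, _⟩ := exists_gap_between hc ht g.hb (hc.sSup_mem hne)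
    (gap_lt_sSup hc hp hne g)
  exact ⟨g₀, gap_lt_iff.2 (lt_of_lt_of_le g.hab h1)⟩

lemma gap_countable : Countable (Gap C) := by
  have h : ∀ g : Gap C, ∃ q : ℚ, (q : ℝ) ∈ Set.Ioo g.a g.b := fun g => exists_rat_btwn g.hab
  choose q hq using h
  have hinj : Function.Injective q := by
    intro g g' he
    by_contra hne
    have hne' : g.a ≠ g'.a := fun h => hne (gap_fst_injective h)
    rcases lt_or_gt_of_ne hne' with hlt | hlt
    · have h1 := gap_b_le_a (gap_lt_iff.2 hlt)
      have h2 : ((q g' : ℚ) : ℝ) < g.b := he ▸ (hq g).2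
      exact lt_irrefl _ (((hq g').1.trans h2).trans_le h1)
    · have h1 := gap_b_le_a (gap_lt_iff.2 hlt)
      have h2 : ((q g : ℚ) : ℝ) < g'.b := he ▸ (hq g').2
      exact lt_irrefl _ (((hq g).1.trans h2).trans_le h1)
  exact hinj.countable


section Fmap

variable {C D : Set ℝ}

/-- The canonical monotone map induced by an order isomorphism of gap sets:
send `x` to the sup of the images of right endpoints of gaps lying at or below `x`. -/
noncomputable def Fmap (ψ : Gap C ≃o Gap D) (x : ℝ) : ℝ :=
  sSup (insert (sInf D) ((fun g : Gap C => (ψ g).b) '' {g | g.b ≤ x}))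

variable (ψ : Gap C ≃o Gap D)

lemma Fmap_set_subset (hcD : IsCompact D) (hneD : D.Nonempty) (x : ℝ) :
    insert (sInf D) ((fun g : Gap C => (ψ g).b) '' {g | g.b ≤ x}) ⊆ D := by
  rintro y (rfl | ⟨g, _, rfl⟩)
  · exact hcD.sInf_mem hneD
  · exact (ψ g).hb

lemma Fmap_set_bdd (hcD : IsCompact D) (hneD : D.Nonempty) (x : ℝ) :
    BddAbove (insert (sInf D) ((fun g : Gap C => (ψ g).b) '' {g | g.b ≤ x})) :=
  hcD.bddAbove.mono (Fmap_set_subset ψ hcD hneD x)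

lemma Fmap_mem (hcD : IsCompact D) (hneD : D.Nonempty) (x : ℝ) : Fmap ψ x ∈ D := by
  have h1 := csSup_mem_closure (Set.insert_nonempty _ _) (Fmap_set_bdd ψ hcD hneD x)
  exact closure_minimal (Fmap_set_subset ψ hcD hneD x) hcD.isClosed h1

lemma Fmap_mono (hcD : IsCompact D) (hneD : D.Nonempty) : Monotone (Fmap ψ) := by
  intro x y hxy
  apply csSup_le_csSup (Fmap_set_bdd ψ hcD hneD y) (Set.insert_nonempty _ _)
  apply Set.insert_subset_insert
  exact Set.image_mono (fun g hg => le_trans hg hxy)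

lemma le_Fmap (hcD : IsCompact D) (hneD : D.Nonempty) {g : Gap C} {x : ℝ} (h : g.b ≤ x) :
    (ψ g).b ≤ Fmap ψ x :=
  le_csSup (Fmap_set_bdd ψ hcD hneD x) (Set.mem_insert_of_mem _ ⟨g, h, rfl⟩)

lemma Fmap_le (hcD : IsCompact D) {g : Gap C} {x : ℝ} (h : x ≤ g.a) :
    Fmap ψ x ≤ (ψ g).a := by
  apply csSup_le (Set.insert_nonempty _ _)
  rintro y (rfl | ⟨g', hg', rfl⟩)
  · exact csInf_le hcD.bddBelow (ψ g).ha
  · have hlt : g' < g := gap_lt_iff.2 (lt_of_lt_of_le g'.hab (le_trans hg' h))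
    exact gap_b_le_a (ψ.lt_iff_lt.2 hlt)

lemma Fmap_b (hcD : IsCompact D) (hneD : D.Nonempty) (g : Gap C) :
    Fmap ψ g.b = (ψ g).b := by
  refine le_antisymm ?_ (le_Fmap ψ hcD hneD le_rfl)
  apply csSup_le (Set.insert_nonempty _ _)
  rintro y (rfl | ⟨g', hg', rfl⟩)
  · exact csInf_le hcD.bddBelow (ψ g).hb
  · rcases eq_or_ne g' g with rfl | hne
    · exact le_rfl
    · have hne' : g'.a ≠ g.a := fun h => hne (gap_fst_injective h)
      rcases lt_or_gt_of_ne hne' with hlt | hgt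
      · exact le_trans (gap_b_le_a (ψ.lt_iff_lt.2 (gap_lt_iff.2 hlt))) (ψ g).hab.le
      · exfalso
        have := gap_b_le_a (gap_lt_iff.2 hgt)
        exact absurd (lt_of_lt_of_le g'.hab hg') (not_lt_of_ge this)

lemma Fmap_a (hcD : IsCompact D) (hpD : Perfect D) (hneD : D.Nonempty)
    (htD : IsTotallyDisconnected D) (g : Gap C) : Fmap ψ g.a = (ψ g).a := by
  refine le_antisymm (Fmap_le ψ hcD le_rfl) ?_
  by_contra hlt
  push_neg at hlt
  obtain ⟨h, hh1, hh2⟩ := exists_gap_between hcD htD (Fmap_mem ψ hcD hneD g.a) (ψ g).ha hlt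
  set g₀ := ψ.symm h with hg₀
  have hge : ψ g₀ = h := ψ.apply_symm_apply h
  have h1 : g₀ < g := by
    rw [← ψ.lt_iff_lt, hge, gap_lt_iff]
    exact lt_of_lt_of_le h.hab hh2
  have h2 : g₀.b ≤ g.a := gap_b_le_a h1
  have h3 : (ψ g₀).b ≤ Fmap ψ g.a := le_Fmap ψ hcD hneD h2
  rw [hge] at h3
  exact absurd (lt_of_lt_of_le h.hab (h3.trans hh1)) (lt_irrefl h.a)

lemma Fmap_sInf (hcC : IsCompact C) (hcD : IsCompact D) (hneD : D.Nonempty) :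
    Fmap ψ (sInf C) = sInf D := by
  have he : {g : Gap C | g.b ≤ sInf C} = ∅ := by
    ext g
    simp only [Set.mem_setOf_eq, Set.mem_empty_iff_false, iff_false, not_le]
    exact lt_of_le_of_lt (csInf_le hcC.bddBelow g.ha) g.hab
  rw [Fmap, he]
  simp

lemma Fmap_sSup (hcC : IsCompact C) (hcD : IsCompact D) (hpD : Perfect D)
    (hneD : D.Nonempty) (htD : IsTotallyDisconnected D) :
    Fmap ψ (sSup C) = sSup D := by
  refine le_antisymm (le_csSup hcD.bddAbove (Fmap_mem ψ hcD hneD _)) ?_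
  by_contra hlt
  push_neg at hlt
  obtain ⟨h, hh1, hh2⟩ := exists_gap_between hcD htD (Fmap_mem ψ hcD hneD (sSup C))
    (hcD.sSup_mem hneD) hlt
  have h2 : (ψ.symm h).b ≤ sSup C := le_csSup hcC.bddAbove (ψ.symm h).hb
  have h3 : (ψ (ψ.symm h)).b ≤ Fmap ψ (sSup C) := le_Fmap ψ hcD hneD h2
  rw [ψ.apply_symm_apply] at h3
  exact absurd (lt_of_lt_of_le h.hab (h3.trans hh1)) (lt_irrefl h.a)

lemma Fmap_strict (hcC : IsCompact C) (htC : IsTotallyDisconnected C)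
    (hcD : IsCompact D) (hneD : D.Nonempty)
    {x y : ℝ} (hx : x ∈ C) (hy : y ∈ C) (hxy : x < y) : Fmap ψ x < Fmap ψ y := by
  obtain ⟨g, h1, h2⟩ := exists_gap_between hcC htC hx hy hxy
  calc Fmap ψ x ≤ (ψ g).a := Fmap_le ψ hcD h1
    _ < (ψ g).b := (ψ g).hab
    _ ≤ Fmap ψ y := le_Fmap ψ hcD hneD h2

/-- Round trip: `Fmap ψ` and `Fmap ψ.symm` are inverse to each other on the sets. -/
lemma Fmap_roundtrip (hcC : IsCompact C) (hcD : IsCompact D)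
    (hpD : Perfect D) (hneC : C.Nonempty) (hneD : D.Nonempty)
    (htD : IsTotallyDisconnected D) {y : ℝ} (hy : y ∈ D) :
    Fmap ψ (Fmap ψ.symm y) = y := by
  set x := Fmap ψ.symm y with hx
  have hxC : x ∈ C := Fmap_mem ψ.symm hcC hneC y
  refine le_antisymm ?_ ?_
  · -- Fmap ψ x ≤ y
    apply csSup_le (Set.insert_nonempty _ _)
    rintro z (rfl | ⟨g, hg, rfl⟩)
    · exact csInf_le hcD.bddBelow hy
    · -- g.b ≤ x implies (ψ g).b ≤ y
      by_contra hgt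
      push_neg at hgt
      -- y ∈ D, y < (ψ g).b, y not in the gap ψ g, so y ≤ (ψ g).a
      have hya : y ≤ (ψ g).a := by
        by_contra h'
        push_neg at h'
        exact (ψ g).notMem_ioo hy ⟨h', hgt⟩
      -- then x = Fmap ψ.symm y ≤ (ψ.symm (ψ g)).a = g.a
      have := Fmap_le ψ.symm hcC (g := ψ g) hya
      rw [ψ.symm_apply_apply] at this
      exact absurd (lt_of_lt_of_le g.hab (hg.trans this)) (lt_irrefl g.a)
  · -- y ≤ Fmap ψ x
    by_contra hlt
    push_neg at hlt
    obtain ⟨h, hh1, hh2⟩ := exists_gap_between hcD htD (Fmap_mem ψ hcD hneD x) hy hlt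
    have h1 : (ψ.symm h).b ≤ x := le_Fmap ψ.symm hcC hneC hh2
    have h3 : (ψ (ψ.symm h)).b ≤ Fmap ψ x := le_Fmap ψ hcD hneD h1
    rw [ψ.apply_symm_apply] at h3
    exact absurd (lt_of_lt_of_le h.hab (h3.trans hh1)) (lt_irrefl h.a)

end Fmap


/-- The affine map sending `[a,b]` to `[a',b']`. -/
noncomputable def aff (a b a' b' x : ℝ) : ℝ := a' + (b' - a') * (x - a) / (b - a)

lemma aff_strictMono {a b a' b' : ℝ} (hab : a < b) (hab' : a' < b') :
    StrictMono (aff a b a' b') := by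
  intro x y hxy
  unfold aff
  have h1 : (0:ℝ) < b - a := by linarith
  have h2 : (0:ℝ) < b' - a' := by linarith
  apply (add_lt_add_iff_left a').2
  rw [div_lt_div_iff₀ h1 h1]
  nlinarith [mul_pos (mul_pos h2 h1) (sub_pos.2 hxy)]

lemma aff_left {a b a' b' : ℝ} : aff a b a' b' a = a' := by
  unfold aff
  rw [sub_self, mul_zero, zero_div, add_zero]

lemma aff_right {a b a' b' : ℝ} (hab : a < b) : aff a b a' b' b = b' := by
  unfold aff
  have h : b - a ≠ 0 := sub_ne_zero.2 hab.ne'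
  field_simp
  ring

lemma aff_mem_Ioo {a b a' b' x : ℝ} (hab : a < b) (hab' : a' < b') (hx : x ∈ Set.Ioo a b) :
    aff a b a' b' x ∈ Set.Ioo a' b' := by
  constructor
  · have := aff_strictMono hab hab' hx.1
    rwa [aff_left] at this
  · have := aff_strictMono hab hab' hx.2
    rwa [aff_right hab] at this

lemma aff_inverse {a b a' b' y : ℝ} (hab : a < b) (hab' : a' < b') :
    aff a b a' b' (aff a' b' a b y) = y := by
  unfold aff
  have h1 : b - a ≠ 0 := by linarith
  have h2 : b' - a' ≠ 0 := by linarith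
  field_simp
  ring

variable {C D : Set ℝ}

lemma gap_unique {g g' : Gap C} {x : ℝ} (h : x ∈ Set.Ioo g.a g.b)
    (h' : x ∈ Set.Ioo g'.a g'.b) : g = g' := by
  by_contra hne
  have hne' : g.a ≠ g'.a := fun he => hne (gap_fst_injective he)
  rcases lt_or_gt_of_ne hne' with hlt | hgt
  · have := gap_b_le_a (gap_lt_iff.2 hlt)
    exact absurd (h.2.trans_le (this.trans h'.1.le)) (lt_irrefl x)
  · have := gap_b_le_a (gap_lt_iff.2 hgt)
    exact absurd (h'.2.trans_le (this.trans h.1.le)) (lt_irrefl x)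

lemma mem_gap_of_notMem (hc : IsCompact C) (hne : C.Nonempty) {x : ℝ}
    (hx : x ∈ Set.Icc (sInf C) (sSup C)) (hxC : x ∉ C) :
    ∃ g : Gap C, x ∈ Set.Ioo g.a g.b := by
  have hm : sInf C ∈ C := hc.sInf_mem hne
  have hM : sSup C ∈ C := hc.sSup_mem hne
  have h1 : sInf C < x := lt_of_le_of_ne hx.1 (fun h => hxC (h ▸ hm))
  have h2 : x < sSup C := lt_of_le_of_ne hx.2 (fun h => hxC (h.symm ▸ hM))
  obtain ⟨g, _, _, hg⟩ := exists_gap_around hc hm hM h1 h2 hxC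
  exact ⟨g, hg⟩

open Classical in
/-- The full order homeomorphism: `Fmap` on the Cantor set, affine across gaps. -/
noncomputable def fullMap (ψ : Gap C ≃o Gap D) (x : ℝ) : ℝ :=
  if h : ∃ g : Gap C, x ∈ Set.Ioo g.a g.b
  then aff h.choose.a h.choose.b (ψ h.choose).a (ψ h.choose).b x
  else Fmap ψ x

variable (ψ : Gap C ≃o Gap D)

lemma fullMap_eq_Fmap {x : ℝ} (hx : x ∈ C) : fullMap ψ x = Fmap ψ x := by
  apply dif_neg
  rintro ⟨g, hg⟩
  exact g.notMem_ioo hx hg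

lemma fullMap_eq_aff {g : Gap C} {x : ℝ} (hx : x ∈ Set.Ioo g.a g.b) :
    fullMap ψ x = aff g.a g.b (ψ g).a (ψ g).b x := by
  have hex : ∃ g' : Gap C, x ∈ Set.Ioo g'.a g'.b := ⟨g, hx⟩
  rw [fullMap, dif_pos hex]
  have := gap_unique hex.choose_spec hx
  rw [this]

lemma fullMap_mem_Ioo {g : Gap C} {x : ℝ} (hx : x ∈ Set.Ioo g.a g.b) :
    fullMap ψ x ∈ Set.Ioo (ψ g).a (ψ g).b := by
  rw [fullMap_eq_aff ψ hx]
  exact aff_mem_Ioo g.hab (ψ g).hab hx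


lemma fullMap_strictMonoOn (hcC : IsCompact C) (hneC : C.Nonempty)
    (htC : IsTotallyDisconnected C) (hcD : IsCompact D) (hneD : D.Nonempty) :
    StrictMonoOn (fullMap ψ) (Set.Icc (sInf C) (sSup C)) := by
  intro x hx y hy hxy
  by_cases hxC : x ∈ C
  · by_cases hyC : y ∈ C
    · rw [fullMap_eq_Fmap ψ hxC, fullMap_eq_Fmap ψ hyC]
      exact Fmap_strict ψ hcC htC hcD hneD hxC hyC hxy
    · obtain ⟨g, hg⟩ := mem_gap_of_notMem hcC hneC hy hyC
      have hxa : x ≤ g.a := by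
        by_contra h'
        push_neg at h'
        exact g.notMem_ioo hxC ⟨h', hxy.trans hg.2⟩
      have h1 : fullMap ψ x ≤ (ψ g).a := by
        rw [fullMap_eq_Fmap ψ hxC]; exact Fmap_le ψ hcD hxa
      exact h1.trans_lt (fullMap_mem_Ioo ψ hg).1
  · obtain ⟨g, hg⟩ := mem_gap_of_notMem hcC hneC hx hxC
    by_cases hyC : y ∈ C
    · have hby : g.b ≤ y := by
        by_contra h'
        push_neg at h'
        exact g.notMem_ioo hyC ⟨hg.1.trans hxy, h'⟩
      have h1 : (ψ g).b ≤ fullMap ψ y := by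
        rw [fullMap_eq_Fmap ψ hyC]; exact le_Fmap ψ hcD hneD hby
      exact lt_of_lt_of_le (fullMap_mem_Ioo ψ hg).2 h1
    · obtain ⟨g', hg'⟩ := mem_gap_of_notMem hcC hneC hy hyC
      rcases eq_or_ne g g' with rfl | hne
      · rw [fullMap_eq_aff ψ hg, fullMap_eq_aff ψ hg']
        exact aff_strictMono g.hab (ψ g).hab hxy
      · have hlt : g < g' := by
          rw [gap_lt_iff]
          by_contra h'
          push_neg at h'
          have hne2 : g'.a ≠ g.a := fun he => hne (gap_fst_injective he).symm
          have hba := gap_b_le_a (gap_lt_iff.2 (lt_of_le_of_ne h' hne2))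
          exact lt_asymm hxy ((hg'.2.trans_le hba).trans hg.1)
        have hmid := gap_b_le_a (ψ.lt_iff_lt.2 hlt)
        exact ((fullMap_mem_Ioo ψ hg).2.trans_le hmid).trans (fullMap_mem_Ioo ψ hg').1

lemma fullMap_image_C (hcC : IsCompact C) (hneC : C.Nonempty)
    (hcD : IsCompact D) (hpD : Perfect D) (hneD : D.Nonempty)
    (htD : IsTotallyDisconnected D) : fullMap ψ '' C = D := by
  apply subset_antisymm
  · rintro _ ⟨x, hx, rfl⟩
    rw [fullMap_eq_Fmap ψ hx]
    exact Fmap_mem ψ hcD hneD x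
  · intro y hy
    have hx : Fmap ψ.symm y ∈ C := Fmap_mem ψ.symm hcC hneC y
    refine ⟨Fmap ψ.symm y, hx, ?_⟩
    rw [fullMap_eq_Fmap ψ hx]
    exact Fmap_roundtrip ψ hcC hcD hpD hneC hneD htD hy

lemma fullMap_image_Icc (hcC : IsCompact C) (hneC : C.Nonempty)
    (hcD : IsCompact D) (hpD : Perfect D) (hneD : D.Nonempty)
    (htD : IsTotallyDisconnected D) :
    fullMap ψ '' Set.Icc (sInf C) (sSup C) = Set.Icc (sInf D) (sSup D) := by
  apply subset_antisymm
  · rintro _ ⟨x, hx, rfl⟩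
    by_cases hxC : x ∈ C
    · rw [fullMap_eq_Fmap ψ hxC]
      have h := Fmap_mem ψ hcD hneD x
      exact ⟨csInf_le hcD.bddBelow h, le_csSup hcD.bddAbove h⟩
    · obtain ⟨g, hg⟩ := mem_gap_of_notMem hcC hneC hx hxC
      have h := fullMap_mem_Ioo ψ hg
      exact ⟨(csInf_le hcD.bddBelow (ψ g).ha).trans h.1.le,
        h.2.le.trans (le_csSup hcD.bddAbove (ψ g).hb)⟩
  · intro y hy
    by_cases hyD : y ∈ D
    · have hx : Fmap ψ.symm y ∈ C := Fmap_mem ψ.symm hcC hneC y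
      refine ⟨Fmap ψ.symm y, ⟨csInf_le hcC.bddBelow hx, le_csSup hcC.bddAbove hx⟩, ?_⟩
      rw [fullMap_eq_Fmap ψ hx]
      exact Fmap_roundtrip ψ hcC hcD hpD hneC hneD htD hyD
    · obtain ⟨h, hh⟩ := mem_gap_of_notMem hcD hneD hy hyD
      set g := ψ.symm h with hgdef
      set x := aff h.a h.b g.a g.b y with hxdef
      have hxg : x ∈ Set.Ioo g.a g.b := aff_mem_Ioo h.hab g.hab hh
      refine ⟨x, ⟨(csInf_le hcC.bddBelow g.ha).trans hxg.1.le,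
        hxg.2.le.trans (le_csSup hcC.bddAbove g.hb)⟩, ?_⟩
      rw [fullMap_eq_aff ψ hxg]
      have hψg : ψ g = h := ψ.apply_symm_apply h
      rw [hψg, hxdef]
      exact aff_inverse g.hab h.hab

end CantorAux


/-- given two Cantor sets `C₁, C₂ ⊂ ℝ` (nonempty, compact, perfect,
totally disconnected), with `mᵢ = min Cᵢ`, `Mᵢ = max Cᵢ`, there is an order-preserving
homeomorphism `f : [m₁, M₁] → [m₂, M₂]` (a continuous strictly increasing surjection
of the closed intervals) with `f(C₁) = C₂`. -/
theorem cantor_order_homeomorphism (C₁ C₂ : Set ℝ)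
    (hne₁ : C₁.Nonempty) (hne₂ : C₂.Nonempty)
    (hc₁ : IsCompact C₁) (hc₂ : IsCompact C₂)
    (hp₁ : Perfect C₁) (hp₂ : Perfect C₂)
    (ht₁ : IsTotallyDisconnected C₁) (ht₂ : IsTotallyDisconnected C₂) :
    ∃ f : ℝ → ℝ,
      ContinuousOn f (Set.Icc (sInf C₁) (sSup C₁)) ∧
      StrictMonoOn f (Set.Icc (sInf C₁) (sSup C₁)) ∧
      f '' Set.Icc (sInf C₁) (sSup C₁) = Set.Icc (sInf C₂) (sSup C₂) ∧
      f '' C₁ = C₂ := by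
  classical
  haveI : Countable (CantorAux.Gap C₁) := CantorAux.gap_countable
  haveI : Countable (CantorAux.Gap C₂) := CantorAux.gap_countable
  haveI : DenselyOrdered (CantorAux.Gap C₁) := CantorAux.gap_densely hc₁ hp₁ hne₁ ht₁
  haveI : DenselyOrdered (CantorAux.Gap C₂) := CantorAux.gap_densely hc₂ hp₂ hne₂ ht₂
  haveI : NoMinOrder (CantorAux.Gap C₁) := CantorAux.gap_noMin hc₁ hp₁ hne₁ ht₁
  haveI : NoMinOrder (CantorAux.Gap C₂) := CantorAux.gap_noMin hc₂ hp₂ hne₂ ht₂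
  haveI : NoMaxOrder (CantorAux.Gap C₁) := CantorAux.gap_noMax hc₁ hp₁ hne₁ ht₁
  haveI : NoMaxOrder (CantorAux.Gap C₂) := CantorAux.gap_noMax hc₂ hp₂ hne₂ ht₂
  haveI : Nonempty (CantorAux.Gap C₁) := CantorAux.gap_nonempty hc₁ hp₁ hne₁ ht₁
  haveI : Nonempty (CantorAux.Gap C₂) := CantorAux.gap_nonempty hc₂ hp₂ hne₂ ht₂
  obtain ⟨ψ⟩ : Nonempty (CantorAux.Gap C₁ ≃o CantorAux.Gap C₂) :=
    Order.iso_of_countable_dense (CantorAux.Gap C₁) (CantorAux.Gap C₂)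
  have hsm : StrictMonoOn (CantorAux.fullMap ψ) (Set.Icc (sInf C₁) (sSup C₁)) :=
    CantorAux.fullMap_strictMonoOn ψ hc₁ hne₁ ht₁ hc₂ hne₂
  have himg : CantorAux.fullMap ψ '' Set.Icc (sInf C₁) (sSup C₁)
      = Set.Icc (sInf C₂) (sSup C₂) :=
    CantorAux.fullMap_image_Icc ψ hc₁ hne₁ hc₂ hp₂ hne₂ ht₂
  have himgC : CantorAux.fullMap ψ '' C₁ = C₂ :=
    CantorAux.fullMap_image_C ψ hc₁ hne₁ hc₂ hp₂ hne₂ ht₂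
  refine ⟨CantorAux.fullMap ψ, ?_, hsm, himg, himgC⟩
  -- continuity: a strictly monotone surjection between closed intervals is continuous
  have hmaps : Set.MapsTo (CantorAux.fullMap ψ) (Set.Icc (sInf C₁) (sSup C₁))
      (Set.Icc (sInf C₂) (sSup C₂)) := by
    rw [← himg]; exact Set.mapsTo_image _ _
  set e : Set.Icc (sInf C₁) (sSup C₁) → Set.Icc (sInf C₂) (sSup C₂) :=
    fun x => ⟨CantorAux.fullMap ψ x, hmaps x.2⟩ with hedef
  have hemono : StrictMono e := by
    intro x y hxy
    exact hsm x.2 y.2 hxy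
  have hesurj : Function.Surjective e := by
    rintro ⟨y, hy⟩
    rw [← himg] at hy
    obtain ⟨x, hx, hfx⟩ := hy
    exact ⟨⟨x, hx⟩, Subtype.ext hfx⟩
  have hecont : Continuous e := by
    have := (StrictMono.orderIsoOfSurjective e hemono hesurj).continuous
    rwa [StrictMono.coe_orderIsoOfSurjective] at this
  rw [continuousOn_iff_continuous_restrict]
  exact continuous_subtype_val.comp hecont
end

section
/- Let G₀, G₁ : ℝ → ℝ be increasing homeomorphisms with G₀(x) < x < G₁(x) for all x, and suppose there exist R > 0 and reals η₀ < 0 < η₁ with η₁/η₀ irrational such that G_i(x) = x + η_i for all x ≤ -R and i ∈ {0,1}. Then for every x ∈ ℝ, the orbit {G_{i_{n-1}} ∘ ⋯ ∘ G_{i_0}(x) : n ∈ ℕ, i_k ∈ {0,1}} is dense in ℝ. -/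
open Filter Topology

private lemma ratio_ne (η₀ η₁ : ℝ) (hη₀ : η₀ < 0) (hirr : Irrational (η₁ / η₀))
    (p q : ℕ) (hq : q ≠ 0) : (p : ℝ) * η₀ + (q : ℝ) * η₁ ≠ 0 := by
  intro h
  apply hirr
  refine ⟨-((p : ℚ) / q), ?_⟩
  have hq' : (q : ℝ) ≠ 0 := Nat.cast_ne_zero.mpr hq
  have hη₀' : η₀ ≠ 0 := ne_of_lt hη₀
  push_cast
  field_simp
  nlinarith [h]

private lemma subA (η₀ η₁ : ℝ) (hη₀ : η₀ < 0) (hη₁ : 0 < η₁)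
    (hirr : Irrational (η₁ / η₀)) (m n : ℕ) (hs : 0 < (m : ℝ) * η₀ + n * η₁) :
    ∃ m' n' : ℕ, -((m : ℝ) * η₀ + n * η₁) < (m' : ℝ) * η₀ + n' * η₁ ∧
      (m' : ℝ) * η₀ + (n' : ℝ) * η₁ < 0 := by
  obtain ⟨s, hsdef⟩ : ∃ s : ℝ, s = (m : ℝ) * η₀ + n * η₁ := ⟨_, rfl⟩
  rw [← hsdef] at hs ⊢
  obtain ⟨k, hkdef⟩ : ∃ k : ℕ, k = ⌊(-η₀) / s⌋₊ := ⟨_, rfl⟩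
  have hk1 : (k : ℝ) * s ≤ -η₀ := by
    rw [← le_div_iff₀ hs, hkdef]
    exact Nat.floor_le (div_nonneg (by linarith) hs.le)
  have hk2 : -η₀ < ((k : ℝ) + 1) * s := by
    rw [← div_lt_iff₀ hs, hkdef]
    exact Nat.lt_floor_add_one _
  have hn : n ≠ 0 := by
    rintro rfl
    have : (m : ℝ) * η₀ ≤ 0 := mul_nonpos_of_nonneg_of_nonpos (Nat.cast_nonneg m) hη₀.le
    rw [hsdef] at hs; push_cast at hs; linarith
  have hval : ((1 + k * m : ℕ) : ℝ) * η₀ + ((k * n : ℕ) : ℝ) * η₁ = η₀ + k * s := by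
    rw [hsdef]; push_cast; ring
  refine ⟨1 + k * m, k * n, ?_, ?_⟩
  · rw [hval]; linarith
  · rw [hval]
    rcases lt_or_eq_of_le (by nlinarith : η₀ + (k : ℝ) * s ≤ 0) with h | h
    · exact h
    · exfalso
      have hkne : k ≠ 0 := by
        intro hk0; rw [hk0] at h; push_cast at h; linarith
      exact ratio_ne η₀ η₁ hη₀ hirr (1 + k * m) (k * n)
        (by positivity) (by rw [hval]; linarith)

private lemma subB (η₀ η₁ : ℝ) (hη₀ : η₀ < 0) (hη₁ : 0 < η₁)
    (hirr : Irrational (η₁ / η₀)) (m n : ℕ) (ht : (m : ℝ) * η₀ + n * η₁ < 0) :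
    ∃ m' n' : ℕ, 0 < (m' : ℝ) * η₀ + n' * η₁ ∧
      (m' : ℝ) * η₀ + (n' : ℝ) * η₁ < -((m : ℝ) * η₀ + n * η₁) := by
  obtain ⟨t, htdef⟩ : ∃ t : ℝ, t = (m : ℝ) * η₀ + n * η₁ := ⟨_, rfl⟩
  rw [← htdef] at ht ⊢
  have hnt : 0 < -t := by linarith
  obtain ⟨k, hkdef⟩ : ∃ k : ℕ, k = ⌊η₁ / (-t)⌋₊ := ⟨_, rfl⟩
  have hk1 : (k : ℝ) * (-t) ≤ η₁ := by
    rw [← le_div_iff₀ hnt, hkdef]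
    exact Nat.floor_le (div_nonneg hη₁.le hnt.le)
  have hk2 : η₁ < ((k : ℝ) + 1) * (-t) := by
    rw [← div_lt_iff₀ hnt, hkdef]
    exact Nat.lt_floor_add_one _
  have hm : m ≠ 0 := by
    rintro rfl
    have : 0 ≤ (n : ℝ) * η₁ := mul_nonneg (Nat.cast_nonneg n) hη₁.le
    rw [htdef] at ht; push_cast at ht; linarith
  have hval : ((k * m : ℕ) : ℝ) * η₀ + ((1 + k * n : ℕ) : ℝ) * η₁ = η₁ + k * t := by
    rw [htdef]; push_cast; ring
  refine ⟨k * m, 1 + k * n, ?_, ?_⟩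
  · rw [hval]
    rcases lt_or_eq_of_le (by nlinarith : 0 ≤ η₁ + (k : ℝ) * t) with h | h
    · exact h
    · exfalso
      have hkne : k ≠ 0 := by
        intro hk0; rw [hk0] at h; push_cast at h; linarith
      exact ratio_ne η₀ η₁ hη₀ hirr (k * m) (1 + k * n)
        (by positivity) (by rw [hval]; linarith)
  · rw [hval]; nlinarith

private lemma smallPos (η₀ η₁ : ℝ) (hη₀ : η₀ < 0) (hη₁ : 0 < η₁)
    (hirr : Irrational (η₁ / η₀)) (ε : ℝ) (hε : 0 < ε) :
    ∃ m n : ℕ, 0 < (m : ℝ) * η₀ + n * η₁ ∧ (m : ℝ) * η₀ + n * η₁ < ε := by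
  by_contra hcon
  push_neg at hcon
  -- the set of positive semigroup elements
  set P : Set ℝ := {s : ℝ | (∃ m n : ℕ, s = (m : ℝ) * η₀ + n * η₁) ∧ 0 < s} with hP
  have hPη₁ : η₁ ∈ P := ⟨⟨0, 1, by push_cast; ring⟩, hη₁⟩
  have hPne : P.Nonempty := ⟨η₁, hPη₁⟩
  have hPbdd : BddBelow P := ⟨0, fun s hs => hs.2.le⟩
  set d : ℝ := sInf P with hd
  have hdε : ε ≤ d := by
    apply le_csInf hPne
    rintro s ⟨⟨m, n, rfl⟩, hpos⟩
    exact hcon m n hpos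
  have hdpos : 0 < d := lt_of_lt_of_le hε hdε
  obtain ⟨s, hsP, hslt⟩ : ∃ s ∈ P, s < 2 * d :=
    exists_lt_of_csInf_lt hPne (by linarith)
  obtain ⟨⟨m, n, rfl⟩, hspos⟩ := hsP
  obtain ⟨m', n', ht1, ht2⟩ := subA η₀ η₁ hη₀ hη₁ hirr m n hspos
  obtain ⟨m'', n'', hs1, hs2⟩ := subB η₀ η₁ hη₀ hη₁ hirr m' n' ht2
  have hfd : d ≤ (m'' : ℝ) * η₀ + n'' * η₁ := csInf_le hPbdd ⟨⟨m'', n'', rfl⟩, hs1⟩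
  -- now u := s + t ∈ P with u < d, contradiction
  have hu : d ≤ ((m + m' : ℕ) : ℝ) * η₀ + ((n + n' : ℕ) : ℝ) * η₁ := by
    apply csInf_le hPbdd
    refine ⟨⟨m + m', n + n', rfl⟩, ?_⟩
    push_cast
    linarith
  push_cast at hu
  linarith

private lemma hitInterval (η₀ η₁ : ℝ) (hη₀ : η₀ < 0) (hη₁ : 0 < η₁)
    (hirr : Irrational (η₁ / η₀)) (c ℓ : ℝ) (hc : 0 ≤ c) (hℓ : 0 < ℓ) :
    ∃ m n : ℕ, c < (m : ℝ) * η₀ + n * η₁ ∧ (m : ℝ) * η₀ + n * η₁ < c + ℓ := by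
  obtain ⟨m, n, hs0, hsε⟩ := smallPos η₀ η₁ hη₀ hη₁ hirr ℓ hℓ
  set s : ℝ := (m : ℝ) * η₀ + n * η₁ with hs
  obtain ⟨k, hkdef⟩ : ∃ k : ℕ, k = ⌊c / s⌋₊ + 1 := ⟨_, rfl⟩
  have hval : ((k * m : ℕ) : ℝ) * η₀ + ((k * n : ℕ) : ℝ) * η₁ = k * s := by
    rw [hs]; push_cast; ring
  refine ⟨k * m, k * n, ?_, ?_⟩
  · rw [hval]
    have : c / s < ⌊c / s⌋₊ + 1 := Nat.lt_floor_add_one _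
    rw [hkdef]
    push_cast
    calc c = c / s * s := by field_simp
    _ < (⌊c / s⌋₊ + 1) * s := by
        apply mul_lt_mul_of_pos_right this hs0
  · rw [hval]
    have h1 : (⌊c / s⌋₊ : ℝ) * s ≤ c := by
      rw [← le_div_iff₀ hs0]
      exact Nat.floor_le (div_nonneg hc hs0.le)
    rw [hkdef]
    push_cast
    nlinarith

private lemma iter_le' (f : ℝ → ℝ) (hf : Continuous f) (h : ∀ z, f z < z) (x B : ℝ) :
    ∃ k, f^[k] x ≤ B := by
  by_contra hc
  push_neg at hc
  set a : ℕ → ℝ := fun k => f^[k] x with ha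
  have hanti : Antitone a := by
    apply antitone_nat_of_succ_le
    intro n
    simpa [ha, Function.iterate_succ_apply'] using (h (f^[n] x)).le
  have hbdd : BddBelow (Set.range a) := ⟨B, by rintro _ ⟨k, rfl⟩; exact (hc k).le⟩
  have hconv : Filter.Tendsto a Filter.atTop (nhds (⨅ k, a k)) := tendsto_atTop_ciInf hanti hbdd
  have h2 : Filter.Tendsto (fun k => a (k + 1)) Filter.atTop (nhds (⨅ k, a k)) :=
    hconv.comp (Filter.tendsto_add_atTop_nat 1)
  have h3 : Filter.Tendsto (fun k => f (a k)) Filter.atTop (nhds (f (⨅ k, a k))) :=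
    (hf.tendsto _).comp hconv
  have heq : f (⨅ k, a k) = ⨅ k, a k := by
    refine tendsto_nhds_unique ?_ h2
    convert h3 using 2 with k
    simp [ha, Function.iterate_succ_apply']
  exact absurd heq (h _).ne

/-- if `G₀, G₁ : ℝ → ℝ` are increasing homeomorphisms with
`G₀(x) < x < G₁(x)` everywhere, which are the translations by `η₀ < 0 < η₁`
(with `η₁/η₀` irrational) on `(-∞, -R]`, then every orbit of the random dynamical
system generated by `G₀, G₁` is dense in `ℝ`. -/
theorem orbit_dense (G₀ G₁ : ℝ → ℝ)
    (hm₀ : StrictMono G₀) (hm₁ : StrictMono G₁)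
    (hs₀ : Function.Surjective G₀) (hs₁ : Function.Surjective G₁)
    (hbelow : ∀ x : ℝ, G₀ x < x) (habove : ∀ x : ℝ, x < G₁ x)
    (R : ℝ) (hR : 0 < R) (η₀ η₁ : ℝ) (hη₀ : η₀ < 0) (hη₁ : 0 < η₁)
    (hirr : Irrational (η₁ / η₀))
    (ht₀ : ∀ x ≤ -R, G₀ x = x + η₀) (ht₁ : ∀ x ≤ -R, G₁ x = x + η₁)
    (x : ℝ) :
    Dense {y : ℝ | ∃ l : List Bool,
      y = l.foldl (fun z b => if b then G₁ z else G₀ z) x} := by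
  set O : Set ℝ := {y : ℝ | ∃ l : List Bool,
      y = l.foldl (fun z b => if b then G₁ z else G₀ z) x} with hO
  -- continuity facts
  have hc₀ : Continuous G₀ := by
    have := (StrictMono.orderIsoOfSurjective G₀ hm₀ hs₀).continuous
    rwa [StrictMono.coe_orderIsoOfSurjective] at this
  set e₁ := StrictMono.orderIsoOfSurjective G₁ hm₁ hs₁ with he₁
  have he₁coe : ⇑e₁ = G₁ := StrictMono.coe_orderIsoOfSurjective _ _ _
  have hc₁ : Continuous G₁ := by rw [← he₁coe]; exact e₁.continuous
  have hc₁s : Continuous ⇑e₁.symm := e₁.symm.continuous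
  have hsymm_lt : ∀ z, e₁.symm z < z := by
    intro z
    have h1 : z < e₁ z := by rw [he₁coe]; exact habove z
    exact e₁.lt_iff_lt.mp (by rwa [OrderIso.apply_symm_apply])
  -- orbit closure lemmas
  have hxO : x ∈ O := ⟨[], rfl⟩
  have hstep : ∀ y ∈ O, ∀ b : Bool, (if b then G₁ y else G₀ y) ∈ O := by
    rintro y ⟨l, rfl⟩ b
    exact ⟨l ++ [b], by simp [List.foldl_append]⟩
  have hstep₀ : ∀ y ∈ O, G₀ y ∈ O := fun y hy => by simpa using hstep y hy false
  have hstep₁ : ∀ y ∈ O, G₁ y ∈ O := fun y hy => by simpa using hstep y hy true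
  have hiter₀ : ∀ k : ℕ, G₀^[k] x ∈ O := by
    intro k
    induction k with
    | zero => simpa using hxO
    | succ k ih => rw [Function.iterate_succ_apply']; exact hstep₀ _ ih
  have hiter₁ : ∀ N : ℕ, ∀ y ∈ O, G₁^[N] y ∈ O := by
    intro N y hy
    induction N with
    | zero => simpa using hy
    | succ N ih => rw [Function.iterate_succ_apply']; exact hstep₁ _ ih
  have hdown : ∀ y ∈ O, y ≤ -R → ∀ m : ℕ, y + m * η₀ ∈ O ∧ y + m * η₀ ≤ -R := by
    rintro y hy hyR m
    induction m with
    | zero => simpa using ⟨hy, hyR⟩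
    | succ m ih =>
      obtain ⟨ih1, ih2⟩ := ih
      have hG : G₀ (y + m * η₀) = y + m * η₀ + η₀ := ht₀ _ ih2
      have heq : y + ((m + 1 : ℕ) : ℝ) * η₀ = y + (m : ℝ) * η₀ + η₀ := by push_cast; ring
      constructor
      · rw [heq, ← hG]; exact hstep₀ _ ih1
      · rw [heq]; linarith
  have hup : ∀ n : ℕ, ∀ y ∈ O, y ≤ -R → y + n * η₁ ≤ -R + η₁ → y + n * η₁ ∈ O := by
    intro n
    induction n with
    | zero => intro y hy _ _; simpa using hy
    | succ n ih =>
      intro y hy hyR hbound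
      have hcast : y + ((n + 1 : ℕ) : ℝ) * η₁ = y + (n : ℝ) * η₁ + η₁ := by push_cast; ring
      rw [hcast] at hbound ⊢
      have hb : y + (n : ℝ) * η₁ ≤ -R := by linarith
      have h1 : y + (n : ℝ) * η₁ ∈ O := ih y hy hyR (by linarith)
      have h2 := hstep₁ _ h1
      rwa [ht₁ _ hb] at h2
  -- main argument
  rw [Metric.dense_iff]
  intro y ε hε
  obtain ⟨N, hN⟩ := iter_le' (⇑e₁.symm) hc₁s hsymm_lt y (-R - 1)
  set y' := (⇑e₁.symm)^[N] y with hy'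
  have hy'le : y' ≤ -R - 1 := hN
  have hFy' : G₁^[N] y' = y := by
    rw [← he₁coe]
    exact (Function.LeftInverse.iterate e₁.apply_symm_apply N) y
  have hFcont : Continuous (G₁^[N]) := hc₁.iterate N
  obtain ⟨δ, hδpos, hδ⟩ := Metric.continuousAt_iff.mp hFcont.continuousAt ε hε
  set δ' := min δ 1 with hδ'def
  have hδ'pos : 0 < δ' := lt_min hδpos one_pos
  have hδ'1 : δ' ≤ 1 := min_le_right _ _
  have hδ'δ : δ' ≤ δ := min_le_left _ _
  obtain ⟨K, hK⟩ := iter_le' G₀ hc₀ hbelow x (min (y' - δ') (-R))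
  set a := G₀^[K] x with ha
  have haO : a ∈ O := hiter₀ K
  have haR : a ≤ -R := le_trans hK (min_le_right _ _)
  have hau : a ≤ y' - δ' := le_trans hK (min_le_left _ _)
  obtain ⟨m, n, hmn1, hmn2⟩ := hitInterval η₀ η₁ hη₀ hη₁ hirr (y' - δ' - a) (2 * δ')
    (by linarith) (by linarith)
  set z := a + (m : ℝ) * η₀ + (n : ℝ) * η₁ with hz
  have hz1 : y' - δ' < z := by rw [hz]; linarith
  have hz2 : z < y' + δ' := by rw [hz]; linarith
  have hzO : z ∈ O := by
    obtain ⟨h1, h2⟩ := hdown a haO haR m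
    exact hup n (a + (m : ℝ) * η₀) h1 h2 (by linarith)
  refine ⟨G₁^[N] z, ?_, hiter₁ N z hzO⟩
  rw [Metric.mem_ball]
  have hdz : dist z y' < δ := by
    rw [Real.dist_eq, abs_lt]
    constructor <;> linarith
  have := hδ hdz
  rwa [hFy'] at this
end

section
/- Let λ₀, λ₁ > 0, p ∈ (0,1), α ∈ (0,1), M > 0 and x₀ ∈ (0,1) satisfy p·λ₀^{-α} + (1-p)·λ₁^{-α} ≤ 1 and M·x₀^α ≥ 1. Let g₀, g₁ : [0,1] → [0,1] be increasing homeomorphisms with g_i⁻¹(x) < x/λ_i for all x ∈ (0,x₀), i ∈ {0,1}. If μ is a Borel probability measure on (0,1) with μ((0,x)) ≤ M·x^α for all x ∈ (0,1), then the measure Pμ defined by (Pμ)(A) = p·μ(g₀⁻¹(A)) + (1-p)·μ(g₁⁻¹(A)) also satisfies (Pμ)((0,x)) ≤ M·x^α for all x ∈ (0,1). -/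
open MeasureTheory
open scoped ENNReal

/-- invariance of the class `{μ : μ((0,x)) ≤ M x^α}` under the Markov
operator `(Pμ)(A) = p μ(g₀⁻¹(A)) + (1-p) μ(g₁⁻¹(A))` of a random iterated function
system of two increasing homeomorphisms of `[0,1]`, under the stated hypotheses
`p λ₀^{-α} + (1-p) λ₁^{-α} ≤ 1`, `M x₀^α ≥ 1` and `gᵢ⁻¹(x) < x/λᵢ` on `(0,x₀)`.
The measure of the preimage of `(0,x)` under `gᵢ` is `μ {y ∈ (0,1) : 0 < gᵢ(y) < x}`. -/
theorem markov_preserves_NMalpha (l₀ l₁ p α M x₀ : ℝ)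
    (h₀ : 0 < l₀) (h₁ : 0 < l₁) (hp : p ∈ Set.Ioo (0:ℝ) 1)
    (hα : α ∈ Set.Ioo (0:ℝ) 1) (hM : 0 < M) (hx₀ : x₀ ∈ Set.Ioo (0:ℝ) 1)
    (hsum : p * l₀ ^ (-α) + (1 - p) * l₁ ^ (-α) ≤ 1)
    (hMx : 1 ≤ M * x₀ ^ α)
    (g₀ g₁ : ℝ → ℝ)
    (hc₀ : ContinuousOn g₀ (Set.Icc 0 1)) (hc₁ : ContinuousOn g₁ (Set.Icc 0 1))
    (hm₀ : StrictMonoOn g₀ (Set.Icc 0 1)) (hm₁ : StrictMonoOn g₁ (Set.Icc 0 1))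
    (him₀ : g₀ '' Set.Icc 0 1 = Set.Icc 0 1) (him₁ : g₁ '' Set.Icc 0 1 = Set.Icc 0 1)
    (hinv₀ : ∀ x ∈ Set.Ioo 0 x₀, ∀ y ∈ Set.Icc (0:ℝ) 1, g₀ y = x → y < x / l₀)
    (hinv₁ : ∀ x ∈ Set.Ioo 0 x₀, ∀ y ∈ Set.Icc (0:ℝ) 1, g₁ y = x → y < x / l₁)
    (μ : Measure ↥(Set.Ioo (0:ℝ) 1)) (hμ : IsProbabilityMeasure μ)
    (hμb : ∀ x ∈ Set.Ioo (0:ℝ) 1,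
      μ {y : ↥(Set.Ioo (0:ℝ) 1) | (y:ℝ) < x} ≤ ENNReal.ofReal (M * x ^ α)) :
    ∀ x ∈ Set.Ioo (0:ℝ) 1,
      ENNReal.ofReal p *
          μ {y : ↥(Set.Ioo (0:ℝ) 1) | 0 < g₀ (y:ℝ) ∧ g₀ (y:ℝ) < x}
        + ENNReal.ofReal (1 - p) *
          μ {y : ↥(Set.Ioo (0:ℝ) 1) | 0 < g₁ (y:ℝ) ∧ g₁ (y:ℝ) < x}
        ≤ ENNReal.ofReal (M * x ^ α) := by
 
  intro x hx
  obtain ⟨hx0, hx1⟩ := hx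
  obtain ⟨hp0, hp1⟩ := hp
  obtain ⟨hα0, hα1⟩ := hα
  obtain ⟨hx₀0, hx₀1⟩ := hx₀
  have hM1 : (1:ℝ) ≤ M := by
    have hxa : x₀ ^ α ≤ 1 := Real.rpow_le_one hx₀0.le hx₀1.le hα0.le
    nlinarith
  by_cases hcase : x < x₀
  · have key : ∀ (g : ℝ → ℝ) (l : ℝ), 0 < l →
        (∀ x' ∈ Set.Ioo 0 x₀, ∀ y ∈ Set.Icc (0:ℝ) 1, g y = x' → y < x' / l) →
        μ {y : ↥(Set.Ioo (0:ℝ) 1) | 0 < g (y:ℝ) ∧ g (y:ℝ) < x}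
          ≤ ENNReal.ofReal (M * (x / l) ^ α) := by
      intro g l hl hinv
      have hsub : {y : ↥(Set.Ioo (0:ℝ) 1) | 0 < g (y:ℝ) ∧ g (y:ℝ) < x}
          ⊆ {y : ↥(Set.Ioo (0:ℝ) 1) | (y:ℝ) < x / l} := by
        intro y hy
        obtain ⟨hg0, hgx⟩ := hy
        have hy1 : (y:ℝ) ∈ Set.Icc (0:ℝ) 1 := ⟨y.2.1.le, y.2.2.le⟩
        have h := hinv (g (y:ℝ)) ⟨hg0, lt_trans hgx hcase⟩ (y:ℝ) hy1 rfl
        have : g (y:ℝ) / l ≤ x / l := by gcongr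
        exact lt_of_lt_of_le h this
      have hxl : 0 < x / l := div_pos hx0 hl
      by_cases hxl1 : x / l < 1
      · exact le_trans (measure_mono hsub) (hμb (x/l) ⟨hxl, hxl1⟩)
      · have hge : (1:ℝ) ≤ x / l := not_lt.mp hxl1
        have hr : (1:ℝ) ≤ (x/l) ^ α :=
          Real.one_le_rpow hge hα0.le
        have h1 : (1:ℝ) ≤ M * (x/l)^α := by nlinarith
        refine le_trans prob_le_one ?_
        exact (ENNReal.one_le_ofReal).mpr h1
    have k0 := key g₀ l₀ h₀ hinv₀
    have k1 := key g₁ l₁ h₁ hinv₁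
    calc ENNReal.ofReal p *
          μ {y : ↥(Set.Ioo (0:ℝ) 1) | 0 < g₀ (y:ℝ) ∧ g₀ (y:ℝ) < x}
        + ENNReal.ofReal (1 - p) *
          μ {y : ↥(Set.Ioo (0:ℝ) 1) | 0 < g₁ (y:ℝ) ∧ g₁ (y:ℝ) < x}
        ≤ ENNReal.ofReal p * ENNReal.ofReal (M * (x / l₀) ^ α)
          + ENNReal.ofReal (1 - p) * ENNReal.ofReal (M * (x / l₁) ^ α) := by
          gcongr
      _ = ENNReal.ofReal (p * (M * (x / l₀) ^ α) + (1 - p) * (M * (x / l₁) ^ α)) := by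
          rw [← ENNReal.ofReal_mul hp0.le, ← ENNReal.ofReal_mul (by linarith),
            ← ENNReal.ofReal_add (mul_nonneg hp0.le (by positivity)) (mul_nonneg (by linarith) (by positivity))]
      _ ≤ ENNReal.ofReal (M * x ^ α) := by
          apply ENNReal.ofReal_le_ofReal
          have e0 : (x / l₀) ^ α = x ^ α * l₀ ^ (-α) := by
            rw [Real.div_rpow hx0.le h₀.le, Real.rpow_neg h₀.le, div_eq_mul_inv]
          have e1 : (x / l₁) ^ α = x ^ α * l₁ ^ (-α) := by
            rw [Real.div_rpow hx0.le h₁.le, Real.rpow_neg h₁.le, div_eq_mul_inv]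
          have hxα : (0:ℝ) < x ^ α := Real.rpow_pos_of_pos hx0 α
          rw [e0, e1]
          nlinarith [mul_le_mul_of_nonneg_left hsum (by positivity : (0:ℝ) ≤ M * x ^ α)]
  · have hxx : x₀ ≤ x := not_lt.mp hcase
    have h1 : (1:ℝ) ≤ M * x ^ α := by
      have : x₀ ^ α ≤ x ^ α := Real.rpow_le_rpow hx₀0.le hxx hα0.le
      nlinarith
    calc ENNReal.ofReal p *
          μ {y : ↥(Set.Ioo (0:ℝ) 1) | 0 < g₀ (y:ℝ) ∧ g₀ (y:ℝ) < x}
        + ENNReal.ofReal (1 - p) *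
          μ {y : ↥(Set.Ioo (0:ℝ) 1) | 0 < g₁ (y:ℝ) ∧ g₁ (y:ℝ) < x}
        ≤ ENNReal.ofReal p * 1 + ENNReal.ofReal (1 - p) * 1 := by
          gcongr <;> exact prob_le_one
      _ = ENNReal.ofReal p + ENNReal.ofReal (1 - p) := by ring
      _ = ENNReal.ofReal 1 := by
          rw [← ENNReal.ofReal_add hp0.le (by linarith)]; norm_num
      _ ≤ ENNReal.ofReal (M * x ^ α) := ENNReal.ofReal_le_ofReal h1
end
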